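/- For positive integers m and j with j ≤ m−1, the alternating sum over ℓ from j to 2m of (−1)^ℓ · C(2m, ℓ) · Stirling1unsigned(ℓ, ℓ−j) equals 0, where Stirling1unsigned(ℓ, k) is the unsigned Stirling number of the first kind (the bracket [ℓ choose k]). -/

import Mathlib

/-- Unsigned Stirling numbers of the first kind: number of permutations of `n`
elements with exactly `k` cycles. -/
def stirling1 : ℕ → ℕ → ℕ
  | 0, 0 => 1
  | 0, _ + 1 => 0
  | _ + 1, 0 => 0
  | n + 1, k + 1 => n * stirling1 n (k + 1) + stirling1 n k

open Finset Function
open scoped fwdDiff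

private lemma stirling1_eq_zero_of_lt : ∀ n k : ℕ, n < k → stirling1 n k = 0 := by
  intro n
  induction n with
  | zero => intro k hk; obtain ⟨k, rfl⟩ := Nat.exists_eq_succ_of_ne_zero hk.ne'; rfl
  | succ n ih =>
    intro k hk
    obtain ⟨k, rfl⟩ : ∃ k', k = k' + 1 := ⟨k - 1, by omega⟩
    show n * stirling1 n (k + 1) + stirling1 n k = 0
    rw [ih (k + 1) (by omega), ih k (by omega)]
    simp

private lemma stirling1_self (n : ℕ) : stirling1 n n = 1 := by
  induction n with
  | zero => rfl
  | succ n ih =>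
    show n * stirling1 n (n + 1) + stirling1 n n = 1
    rw [stirling1_eq_zero_of_lt n (n + 1) (by omega), ih]
    simp

/-- `g j ℓ` : the function `ℓ ↦ stirling1 ℓ (ℓ - j)`, set to `0` for `ℓ < j`. -/
private def g (j : ℕ) (ℓ : ℕ) : ℤ :=
  if ℓ < j then 0 else (stirling1 ℓ (ℓ - j) : ℤ)

private lemma g_zero : g 0 = fun _ => (1 : ℤ) := by
  funext ℓ; simp [g, stirling1_self]

private lemma fwdDiff_g (j : ℕ) :
    fwdDiff 1 (g (j + 1)) = fun ℓ : ℕ => (ℓ : ℤ) * g j ℓ := by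
  funext ℓ
  simp only [fwdDiff]
  rcases lt_trichotomy ℓ j with h | rfl | h
  · rw [g, g, g, if_pos (show ℓ + 1 < j + 1 by omega), if_pos (show ℓ < j + 1 by omega),
      if_pos (show ℓ < j by omega)]
    ring
  · rw [g, g, g, if_neg (show ¬ (ℓ + 1 < ℓ + 1) by omega), if_pos (show ℓ < ℓ + 1 by omega),
      if_neg (show ¬ (ℓ < ℓ) by omega)]
    have h1 : ℓ + 1 - (ℓ + 1) = 0 := by omega
    have h2 : ℓ - ℓ = 0 := by omega
    rw [h1, h2]
    rcases Nat.eq_zero_or_pos ℓ with rfl | hpos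
    · simp [stirling1]
    · obtain ⟨n, rfl⟩ := Nat.exists_eq_succ_of_ne_zero hpos.ne'
      simp [stirling1]
  · -- ℓ > j, so ℓ ≥ j + 1
    rw [g, g, g, if_neg (show ¬ (ℓ + 1 < j + 1) by omega), if_neg (show ¬ (ℓ < j + 1) by omega),
      if_neg (show ¬ (ℓ < j) by omega)]
    have h1 : ℓ + 1 - (j + 1) = (ℓ - (j + 1)) + 1 := by omega
    have h2 : ℓ - j = (ℓ - (j + 1)) + 1 := by omega
    obtain ⟨n, rfl⟩ : ∃ n, ℓ = n + 1 := ⟨ℓ - 1, by omega⟩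
    rw [h1]
    show ((stirling1 (n + 1 + 1) ((n + 1 - (j + 1)) + 1) : ℤ)) - _ = _
    rw [show stirling1 (n + 1 + 1) ((n + 1 - (j + 1)) + 1)
        = (n + 1) * stirling1 (n + 1) ((n + 1 - (j + 1)) + 1)
          + stirling1 (n + 1) (n + 1 - (j + 1)) from rfl]
    rw [h2]
    push_cast
    ring

private lemma fwdDiff_comp_succ (f : ℕ → ℤ) :
    fwdDiff 1 (fun ℓ => f (ℓ + 1)) = fun ℓ => (fwdDiff 1 f) (ℓ + 1) := by
  funext ℓ; simp [fwdDiff]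

private lemma fwdDiff_iter_comp_succ (f : ℕ → ℤ) (n : ℕ) :
    (fwdDiff 1)^[n] (fun ℓ => f (ℓ + 1)) = fun ℓ => ((fwdDiff 1)^[n] f) (ℓ + 1) := by
  induction n generalizing f with
  | zero => simp
  | succ n ih =>
    rw [iterate_succ_apply, iterate_succ_apply, fwdDiff_comp_succ, ih]

private lemma fwdDiff_iter_zero (n : ℕ) :
    (fwdDiff 1)^[n] (fun _ : ℕ => (0 : ℤ)) = fun _ => (0 : ℤ) := by
  induction n with
  | zero => rfl
  | succ n ih => rw [iterate_succ_apply, show fwdDiff 1 (fun _ : ℕ => (0:ℤ)) = fun _ => (0:ℤ) by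
      funext ℓ; simp [fwdDiff], ih]

private lemma key_mul (k : ℕ) (f : ℕ → ℤ) (hf : (fwdDiff 1)^[k] f = fun _ => 0) :
    (fwdDiff 1)^[k + 1] (fun ℓ : ℕ => (ℓ : ℤ) * f ℓ) = fun _ => 0 := by
  induction k generalizing f with
  | zero =>
    simp only [iterate_zero, id_eq] at hf
    rw [hf]
    simpa using fwdDiff_iter_zero 1
  | succ k ih =>
    have hdiff : fwdDiff 1 (fun ℓ : ℕ => (ℓ : ℤ) * f ℓ)
        = (fun ℓ : ℕ => (ℓ : ℤ) * (fwdDiff 1 f) ℓ) + fun ℓ => f (ℓ + 1) := by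
      funext ℓ
      simp only [fwdDiff, Pi.add_apply]
      push_cast
      ring
    rw [iterate_succ_apply, hdiff, fwdDiff_iter_add]
    have h1 : (fwdDiff 1)^[k] (fwdDiff 1 f) = fun _ => 0 := by
      rw [← iterate_succ_apply]; exact hf
    rw [ih _ h1, fwdDiff_iter_comp_succ]
    have h2 : (fwdDiff 1)^[k + 1] f = fun _ => 0 := hf
    rw [h2]
    funext ℓ; simp

private lemma g_diff_vanish (j : ℕ) : (fwdDiff 1)^[2 * j + 1] (g j) = fun _ => 0 := by
  induction j with
  | zero =>
    rw [g_zero]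
    simpa using fwdDiff_iter_zero 1
  | succ j ih =>
    have : 2 * (j + 1) + 1 = (2 * j + 1 + 1) + 1 := by ring
    rw [this, iterate_succ_apply, fwdDiff_g, key_mul _ _ ih]

theorem stmt0 (m j : ℕ) (hm : 0 < m) (hj : 0 < j) (hjm : j ≤ m - 1) :
    ∑ ℓ ∈ Finset.Icc j (2 * m),
      (-1 : ℤ) ^ ℓ * (Nat.choose (2 * m) ℓ : ℤ) * (stirling1 ℓ (ℓ - j) : ℤ) = 0 := by
  have hzero : (fwdDiff 1)^[2 * m] (g j) = fun _ => 0 := by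
    obtain ⟨r, hr⟩ : ∃ r, 2 * m = (2 * j + 1) + r := ⟨2 * m - (2 * j + 1), by omega⟩
    rw [hr, add_comm, iterate_add_apply, g_diff_vanish, fwdDiff_iter_zero]
  have hsum := fwdDiff_iter_eq_sum_shift (1 : ℕ) (g j) (2 * m) 0
  rw [hzero] at hsum
  have hsum' : ∑ k ∈ range (2 * m + 1), (-1 : ℤ) ^ k * (Nat.choose (2 * m) k : ℤ) * g j k
      = 0 := by
    have := hsum.symm
    simp only [Pi.zero_apply, smul_eq_mul, zero_add, smul_eq_mul, mul_one] at this
    rw [← this]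
    apply Finset.sum_congr rfl
    intro k hk
    simp only [Finset.mem_range] at hk
    have hsigneq : (-1 : ℤ) ^ (2 * m - k) = (-1 : ℤ) ^ k := by
      have h1 : 2 * m - k + 2 * k = 2 * m + k := by omega
      have : ((-1 : ℤ)) ^ (2 * m - k + 2 * k) = (-1 : ℤ) ^ (2 * m + k) := by rw [h1]
      rw [pow_add, pow_add, pow_mul, pow_mul] at this
      simpa using this
    rw [hsigneq]
  have h1 : ∑ ℓ ∈ Finset.Icc j (2 * m),
      (-1 : ℤ) ^ ℓ * (Nat.choose (2 * m) ℓ : ℤ) * (stirling1 ℓ (ℓ - j) : ℤ)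
      = ∑ ℓ ∈ Finset.Icc j (2 * m),
        (-1 : ℤ) ^ ℓ * (Nat.choose (2 * m) ℓ : ℤ) * g j ℓ := by
    apply Finset.sum_congr rfl
    intro x hx
    simp only [Finset.mem_Icc] at hx
    rw [g, if_neg (show ¬ x < j by omega)]
  have h2 : ∑ ℓ ∈ Finset.Icc j (2 * m),
      (-1 : ℤ) ^ ℓ * (Nat.choose (2 * m) ℓ : ℤ) * g j ℓ
      = ∑ k ∈ range (2 * m + 1),
        (-1 : ℤ) ^ k * (Nat.choose (2 * m) k : ℤ) * g j k := by
    apply Finset.sum_subset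
    · intro x hx
      simp only [Finset.mem_Icc] at hx
      simp only [Finset.mem_range]
      omega
    · intro x hx hnx
      simp only [Finset.mem_range] at hx
      simp only [Finset.mem_Icc] at hnx
      rw [g, if_pos (show x < j by omega)]
      ring
  rw [h1, h2]
  exact hsum'
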